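/- (Weighted Johnson bound) Let q ≥ 2 and n ≥ 1 be integers, let 0 ≤ β ≤ 1, and let C ⊆ (Fin n → Fin q) be a code such that every two distinct codewords h₁, h₂ ∈ C satisfy Δ(h₁, h₂) ≥ (1 − 1/q)·(1 − β). Let w : Fin n → Fin q → ℝ be nonnegative weights, and for each i set W_i = Σ_{j} w i j and W_i^{(2)} = Σ_{j} (w i j)², assuming W_i > 0 for every i. Then the number of codewords h ∈ C satisfying (1/n)·Σ_i (w i (h i))/W_i > 1/q + sqrt( (1 − 1/q) · ( (1/n)·Σ_i ( W_i^{(2)}/W_i² − 1/q ) ) · β ) is at most (q − 1)·n + 1. -/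

import Mathlib

open scoped RealInnerProductSpace
open Finset Module

/-- Fractional Hamming distance between two words of length `n`. -/
noncomputable def fracDist {n q : ℕ} (f g : Fin n → Fin q) : ℝ :=
  (hammingDist f g : ℝ) / n

section Obtuse

variable {E : Type*} [NormedAddCommGroup E] [InnerProductSpace ℝ E]

lemma obtuse_zero_coeff (s : Finset E) (x₀ : E)
    (hneg : ∀ x ∈ s, ⟪x₀, x⟫ < 0)
    (hpair : ∀ x ∈ s, ∀ y ∈ s, x ≠ y → ⟪x, y⟫ < 0)
    (f : E → ℝ) (hsum : ∑ x ∈ s, f x • x = 0) : ∀ x ∈ s, f x = 0 := by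
  classical
  set P := s.filter (fun x => 0 < f x) with hP
  set N := s.filter (fun x => f x < 0) with hN
  have hPs : P ⊆ s := filter_subset _ _
  have hNs : N ⊆ s := filter_subset _ _
  have h1 : ∑ x ∈ s.filter (fun x => ¬ 0 < f x), f x • x = ∑ x ∈ N, f x • x := by
    refine (Finset.sum_subset ?_ ?_).symm
    · intro x hx
      rcases mem_filter.1 hx with ⟨h1, h2⟩
      exact mem_filter.2 ⟨h1, not_lt.2 h2.le⟩
    · intro x hx hxN
      rcases mem_filter.1 hx with ⟨hxs, hx0⟩
      have hfx : f x = 0 :=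
        le_antisymm (not_lt.1 hx0) (not_lt.1 fun h => hxN (mem_filter.2 ⟨hxs, h⟩))
      simp [hfx]
  have hsplit : ∑ x ∈ P, f x • x + ∑ x ∈ N, f x • x = 0 := by
    rw [← h1, Finset.sum_filter_add_sum_filter_not s, hsum]
  set u : E := ∑ x ∈ P, f x • x with hu
  have huN : u = ∑ x ∈ N, (-f x) • x := by
    have : u = - ∑ x ∈ N, f x • x := by
      rw [hu]; linear_combination (norm := module) hsplit
    rw [this, ← Finset.sum_neg_distrib]
    exact Finset.sum_congr rfl fun x _ => by rw [neg_smul]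
  have huu : ⟪u, u⟫ ≤ 0 := by
    have : ⟪u, u⟫ = ∑ x ∈ P, ∑ y ∈ N, f x * (-f y * ⟪x, y⟫) := by
      nth_rewrite 2 [huN]
      rw [hu, sum_inner]
      refine Finset.sum_congr rfl fun x hx => ?_
      rw [real_inner_smul_left, inner_sum, Finset.mul_sum]
      refine Finset.sum_congr rfl fun y hy => ?_
      rw [real_inner_smul_right]
    rw [this]
    refine Finset.sum_nonpos fun x hx => Finset.sum_nonpos fun y hy => ?_
    have hfx : 0 < f x := (mem_filter.1 hx).2
    have hfy : f y < 0 := (mem_filter.1 hy).2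
    have hxy : x ≠ y := fun h => absurd (h ▸ hfx) (not_lt.2 hfy.le)
    have := hpair x (hPs hx) y (hNs hy) hxy
    have h2 : -f y * ⟪x, y⟫ ≤ 0 := mul_nonpos_of_nonneg_of_nonpos (by linarith) this.le
    exact mul_nonpos_of_nonneg_of_nonpos hfx.le h2
  have hu0 : u = 0 := real_inner_self_nonpos.1 huu
  have hP0 : P = ∅ := by
    by_contra hPne
    have hx0u : ⟪x₀, u⟫ = 0 := by rw [hu0, inner_zero_right]
    have : ⟪x₀, u⟫ < 0 := by
      rw [hu, inner_sum]
      have := Finset.sum_lt_sum_of_nonempty (Finset.nonempty_of_ne_empty hPne)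
        (f := fun x => ⟪x₀, f x • x⟫) (g := fun _ => (0:ℝ)) ?_
      · simpa using this
      · intro x hx
        rw [real_inner_smul_right]
        exact mul_neg_of_pos_of_neg (mem_filter.1 hx).2 (hneg x (hPs hx))
    linarith
  have hN0 : N = ∅ := by
    by_contra hNne
    have hx0u : ⟪x₀, u⟫ = 0 := by rw [hu0, inner_zero_right]
    have : ⟪x₀, u⟫ < 0 := by
      rw [huN, inner_sum]
      have := Finset.sum_lt_sum_of_nonempty (Finset.nonempty_of_ne_empty hNne)
        (f := fun x => ⟪x₀, (-f x) • x⟫) (g := fun _ => (0:ℝ)) ?_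
      · simpa using this
      · intro x hx
        rw [real_inner_smul_right]
        have hfx : f x < 0 := (mem_filter.1 hx).2
        exact mul_neg_of_pos_of_neg (by linarith) (hneg x (hNs hx))
    linarith
  intro x hx
  by_contra hfx
  rcases lt_or_gt_of_ne hfx with h | h
  · have hmem : x ∈ N := by rw [hN]; exact mem_filter.2 ⟨hx, h⟩
    rw [hN0] at hmem; simp at hmem
  · have hmem : x ∈ P := by rw [hP]; exact mem_filter.2 ⟨hx, h⟩
    rw [hP0] at hmem; simp at hmem

lemma obtuse_card (W : Submodule ℝ E) [FiniteDimensional ℝ W]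
    (s : Finset E) (hmem : ∀ x ∈ s, x ∈ W)
    (hpair : ∀ x ∈ s, ∀ y ∈ s, x ≠ y → ⟪x, y⟫ < 0) :
    s.card ≤ finrank ℝ W + 1 := by
  classical
  rcases s.eq_empty_or_nonempty with rfl | ⟨x₀, hx₀⟩
  · simp
  set s' := s.erase x₀ with hs'
  have hsub : s' ⊆ s := erase_subset _ _
  set v : {x // x ∈ s'} → W := fun x => ⟨x.1, hmem _ (hsub x.2)⟩ with hv
  have hli : LinearIndependent ℝ v := by
    rw [Fintype.linearIndependent_iff]
    intro g hg x
    set f : E → ℝ := fun e => if h : e ∈ s' then g ⟨e, h⟩ else 0 with hf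
    have hfs : ∑ e ∈ s', f e • e = 0 := by
      have h2 := congrArg (W.subtype) hg
      rw [map_sum, map_zero] at h2
      rw [← Finset.sum_attach s' (fun e => f e • e)]
      rw [← h2, Finset.univ_eq_attach]
      refine Finset.sum_congr rfl fun x _ => ?_
      simp [hf, x.2, v]
    have hzero := obtuse_zero_coeff s' x₀
      (fun x hx => hpair x₀ hx₀ x (hsub hx) (fun h => (Finset.ne_of_mem_erase hx) h.symm))
      (fun x hx y hy hxy => hpair x (hsub hx) y (hsub hy) hxy) f hfs
    have := hzero x.1 x.2
    simpa [hf, x.2] using this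
  have hcard : s'.card ≤ finrank ℝ W := by
    have := hli.fintype_card_le_finrank
    simpa [Fintype.card_coe] using this
  have : s.card = s'.card + 1 := by
    rw [hs', Finset.card_erase_add_one hx₀]
  omega

end Obtuse

section Johnson

variable (n q : ℕ)

/-- Row-sum linear map on `ℝ^{n×q}`. -/
noncomputable def rowSumMap : EuclideanSpace ℝ (Fin n × Fin q) →ₗ[ℝ] (Fin n → ℝ) where
  toFun v := fun i => ∑ j, v (i, j)
  map_add' u v := by
    ext i
    exact Finset.sum_add_distrib
  map_smul' c v := by
    ext i
    simp [Finset.mul_sum]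

lemma finrank_ker_rowSumMap (hq : 1 ≤ q) :
    finrank ℝ (LinearMap.ker (rowSumMap n q)) = n * (q - 1) := by
  have hq0 : (q : ℝ) ≠ 0 := Nat.cast_ne_zero.2 (by omega)
  have hsurj : Function.Surjective (rowSumMap n q) := by
    intro u
    refine ⟨WithLp.toLp 2 (fun p : Fin n × Fin q => u p.1 / q), ?_⟩
    ext i
    show ∑ j : Fin q, u i / (q:ℝ) = u i
    rw [Finset.sum_const, Finset.card_univ, Fintype.card_fin]
    rw [nsmul_eq_mul]; field_simp
  have h1 := (rowSumMap n q).finrank_range_add_finrank_ker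
  rw [LinearMap.range_eq_top.2 hsurj, finrank_top] at h1
  rw [Module.finrank_fintype_fun_eq_card, finrank_euclideanSpace] at h1
  simp only [Fintype.card_fin, Fintype.card_prod] at h1
  have h2 : n * (q - 1) + n = n * q := by
    calc n * (q - 1) + n = n * ((q - 1) + 1) := by ring
      _ = n * q := by rw [Nat.sub_add_cancel hq]
  omega

variable {n q}

/-- The centered indicator vector of a word. -/
noncomputable def johnsonX (h : Fin n → Fin q) : EuclideanSpace ℝ (Fin n × Fin q) :=
  WithLp.toLp 2 (fun p : Fin n × Fin q => (if h p.1 = p.2 then (1:ℝ) else 0) - 1 / q)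

/-- The centered normalized weight vector. -/
noncomputable def johnsonY (w : Fin n → Fin q → ℝ) : EuclideanSpace ℝ (Fin n × Fin q) :=
  WithLp.toLp 2 (fun p : Fin n × Fin q => w p.1 p.2 / (∑ j, w p.1 j) - 1 / q)

lemma johnsonX_mem_ker (hq : (q:ℝ) ≠ 0) (h : Fin n → Fin q) :
    johnsonX h ∈ LinearMap.ker (rowSumMap n q) := by
  rw [LinearMap.mem_ker]
  ext i
  show ∑ j : Fin q, ((if h i = j then (1:ℝ) else 0) - 1/q) = 0
  rw [Finset.sum_sub_distrib]
  simp
  field_simp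
  norm_num

lemma johnsonY_mem_ker (hq : (q:ℝ) ≠ 0) (w : Fin n → Fin q → ℝ)
    (hWpos : ∀ i, 0 < ∑ j, w i j) :
    johnsonY w ∈ LinearMap.ker (rowSumMap n q) := by
  rw [LinearMap.mem_ker]
  ext i
  show ∑ j : Fin q, (w i j / (∑ j', w i j') - 1/q) = 0
  rw [Finset.sum_sub_distrib, ← Finset.sum_div, div_self (hWpos i).ne']
  simp
  field_simp
  norm_num

lemma inner_johnsonX (hq : (q:ℝ) ≠ 0) (h₁ h₂ : Fin n → Fin q) :
    ⟪johnsonX h₁, johnsonX h₂⟫ = ((n : ℝ) - hammingDist h₁ h₂) - n / q := by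
  rw [PiLp.inner_apply]
  simp only [RCLike.inner_apply, conj_trivial, johnsonX, PiLp.toLp_apply]
  rw [Fintype.sum_prod_type]
  have key : ∀ i : Fin n,
      ∑ j : Fin q, ((if h₁ i = j then (1:ℝ) else 0) - 1/q) *
        ((if h₂ i = j then (1:ℝ) else 0) - 1/q)
      = (if h₁ i = h₂ i then (1:ℝ) else 0) - 1/q := by
    intro i
    have e : ∀ j : Fin q, ((if h₁ i = j then (1:ℝ) else 0) - 1/q) *
        ((if h₂ i = j then (1:ℝ) else 0) - 1/q)
        = (if h₁ i = j ∧ h₂ i = j then (1:ℝ) else 0)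
          - (1/q) * (if h₁ i = j then (1:ℝ) else 0)
          - (1/q) * (if h₂ i = j then (1:ℝ) else 0) + 1/q^2 := by
      intro j
      by_cases e1 : h₁ i = j <;> by_cases e2 : h₂ i = j <;> simp [e1, e2] <;> ring
    rw [Finset.sum_congr rfl (fun j _ => e j)]
    rw [Finset.sum_add_distrib, Finset.sum_sub_distrib, Finset.sum_sub_distrib]
    rw [← Finset.mul_sum, ← Finset.mul_sum]
    have s1 : ∑ j : Fin q, (if h₁ i = j ∧ h₂ i = j then (1:ℝ) else 0)
        = (if h₁ i = h₂ i then (1:ℝ) else 0) := by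
      by_cases e3 : h₁ i = h₂ i
      · simp [e3]
      · simp only [e3, if_false]
        refine Finset.sum_eq_zero fun j _ => ?_
        by_cases e4 : h₁ i = j <;> by_cases e5 : h₂ i = j <;> simp_all
    rw [s1]
    simp only [Finset.sum_ite_eq, Finset.mem_univ, if_true]
    rw [Finset.sum_const, Finset.card_univ, Fintype.card_fin]
    field_simp
    ring_nf
    field_simp
    ring
  rw [Finset.sum_congr rfl (fun i _ => (Finset.sum_congr rfl (fun j _ => mul_comm _ _)).trans (key i))]
  rw [Finset.sum_sub_distrib]
  have s2 : ∑ i : Fin n, (if h₁ i = h₂ i then (1:ℝ) else 0)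
      = (n : ℝ) - hammingDist h₁ h₂ := by
    rw [Finset.sum_boole]
    have hcc := Finset.card_filter_add_card_filter_not
      (s := (Finset.univ : Finset (Fin n))) (p := fun i => h₁ i = h₂ i)
    simp only [Finset.card_univ, Fintype.card_fin] at hcc
    have hd : hammingDist h₁ h₂ = (Finset.univ.filter (fun i => ¬ h₁ i = h₂ i)).card := rfl
    rw [← hd] at hcc
    have hcast := congrArg (Nat.cast (R := ℝ)) hcc
    push_cast at hcast
    linarith
  rw [s2, Finset.sum_const, Finset.card_univ, Fintype.card_fin]
  rw [nsmul_eq_mul]; field_simp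

lemma inner_johnsonXY (hq : (q:ℝ) ≠ 0) (h : Fin n → Fin q)
    (w : Fin n → Fin q → ℝ) (hWpos : ∀ i, 0 < ∑ j, w i j) :
    ⟪johnsonX h, johnsonY w⟫ = (∑ i, w i (h i) / (∑ j, w i j)) - n / q := by
  rw [PiLp.inner_apply]
  simp only [RCLike.inner_apply, conj_trivial, johnsonX, johnsonY, PiLp.toLp_apply]
  rw [Fintype.sum_prod_type]
  have key : ∀ i : Fin n,
      ∑ j : Fin q, ((if h i = j then (1:ℝ) else 0) - 1/q) *
        (w i j / (∑ j', w i j') - 1/q)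
      = w i (h i) / (∑ j', w i j') - 1/q := by
    intro i
    have hW : (∑ j', w i j') ≠ 0 := (hWpos i).ne'
    have e : ∀ j : Fin q, ((if h i = j then (1:ℝ) else 0) - 1/q) *
        (w i j / (∑ j', w i j') - 1/q)
        = (if h i = j then (w i j / (∑ j', w i j')) else 0)
          - (1/q) * (if h i = j then (1:ℝ) else 0)
          - (1/q) * (w i j / (∑ j', w i j')) + 1/q^2 := by
      intro j
      by_cases e1 : h i = j <;> simp [e1] <;> ring
    rw [Finset.sum_congr rfl (fun j _ => e j)]
    rw [Finset.sum_add_distrib, Finset.sum_sub_distrib, Finset.sum_sub_distrib]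
    rw [← Finset.mul_sum, ← Finset.mul_sum]
    have s1 : ∑ j : Fin q, (if h i = j then (w i j / (∑ j', w i j')) else 0)
        = w i (h i) / (∑ j', w i j') := by
      rw [Finset.sum_ite_eq]
      simp
    have s2 : ∑ j : Fin q, w i j / (∑ j', w i j') = 1 := by
      rw [← Finset.sum_div, div_self hW]
    rw [s1, s2]
    simp only [Finset.sum_ite_eq, Finset.mem_univ, if_true]
    rw [Finset.sum_const, Finset.card_univ, Fintype.card_fin]
    field_simp
    ring_nf
    field_simp
    ring
  rw [Finset.sum_congr rfl (fun i _ => (Finset.sum_congr rfl (fun j _ => mul_comm _ _)).trans (key i))]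
  rw [Finset.sum_sub_distrib, Finset.sum_const, Finset.card_univ, Fintype.card_fin]
  rw [nsmul_eq_mul]; field_simp

lemma inner_johnsonYY (hq : (q:ℝ) ≠ 0) (w : Fin n → Fin q → ℝ)
    (hWpos : ∀ i, 0 < ∑ j, w i j) :
    ⟪johnsonY w, johnsonY w⟫
      = ∑ i, ((∑ j, (w i j)^2) / (∑ j, w i j)^2 - 1/q) := by
  rw [PiLp.inner_apply]
  simp only [RCLike.inner_apply, conj_trivial, johnsonY, PiLp.toLp_apply]
  rw [Fintype.sum_prod_type]
  refine Finset.sum_congr rfl fun i _ => ?_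
  have hW : (∑ j', w i j') ≠ 0 := (hWpos i).ne'
  have e : ∀ j : Fin q, (w i j / (∑ j', w i j') - 1/q) *
      (w i j / (∑ j', w i j') - 1/q)
      = (w i j)^2 / (∑ j', w i j')^2
        - (2/q) * (w i j / (∑ j', w i j')) + 1/q^2 := by
    intro j
    field_simp
    ring
  rw [Finset.sum_congr rfl (fun j _ => e j)]
  rw [Finset.sum_add_distrib, Finset.sum_sub_distrib]
  rw [← Finset.sum_div, ← Finset.mul_sum]
  have s2 : ∑ j : Fin q, w i j / (∑ j', w i j') = 1 := by
    rw [← Finset.sum_div, div_self hW]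
  rw [s2, Finset.sum_const, Finset.card_univ, Fintype.card_fin]
  field_simp
  ring_nf
  field_simp
  ring

end Johnson

/-- **Weighted Johnson bound.** If a code `C ⊆ [q]^n` has minimum fractional distance at
least `(1 - 1/q)(1 - β)`, then for any nonnegative weights `w i j` (with positive row sums
`W i = Σ_j w i j` and `W² i = Σ_j (w i j)²`), the number of codewords `h` with
`𝔼_i [w i (h i) / W i] > 1/q + sqrt((1 - 1/q) · 𝔼_i [W² i / (W i)² - 1/q] · β)` is at most
`(q-1)·n + 1`. -/
theorem weighted_johnson_bound (q n : ℕ) (hq : 2 ≤ q) (hn : 1 ≤ n)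
    (β : ℝ) (hβ0 : 0 ≤ β) (hβ1 : β ≤ 1)
    (C : Set (Fin n → Fin q))
    (hdist : ∀ h₁ ∈ C, ∀ h₂ ∈ C, h₁ ≠ h₂ →
      (1 - 1 / (q : ℝ)) * (1 - β) ≤ fracDist h₁ h₂)
    (w : Fin n → Fin q → ℝ) (hw : ∀ i j, 0 ≤ w i j)
    (hWpos : ∀ i, 0 < ∑ j, w i j) :
    Set.ncard {h | h ∈ C ∧
        (1 / (n : ℝ)) * ∑ i, w i (h i) / (∑ j, w i j) >
          1 / (q : ℝ) + Real.sqrt ((1 - 1 / (q : ℝ)) *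
            ((1 / (n : ℝ)) * ∑ i, ((∑ j, (w i j) ^ 2) / (∑ j, w i j) ^ 2 - 1 / (q : ℝ))) * β)}
      ≤ (q - 1) * n + 1 := by
  classical
  have hn0 : (0:ℝ) < n := by positivity
  have hq0 : (0:ℝ) < q := by
    have : (0:ℕ) < q := by omega
    exact_mod_cast this
  have hq0' : (q:ℝ) ≠ 0 := hq0.ne'
  set a : ℝ := 1 - 1/(q:ℝ) with ha
  have ha0 : 0 < a := by
    rw [ha]
    have : 1/(q:ℝ) ≤ 1/2 := by
      apply one_div_le_one_div_of_le <;> [norm_num; exact_mod_cast hq]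
    linarith
  set σ : ℝ := (1/(n:ℝ)) * ∑ i, ((∑ j, (w i j)^2) / (∑ j, w i j)^2 - 1/(q:ℝ)) with hσ
  set t : ℝ := Real.sqrt (a * σ * β) with htdef
  have ht0 : 0 ≤ t := Real.sqrt_nonneg _
  set S : Finset (Fin n → Fin q) := Finset.univ.filter (fun h => h ∈ C ∧
    (1/(n:ℝ)) * ∑ i, w i (h i) / (∑ j, w i j) > 1/(q:ℝ) + t) with hSdef
  have hset : {h | h ∈ C ∧
      (1 / (n : ℝ)) * ∑ i, w i (h i) / (∑ j, w i j) > 1 / (q : ℝ) + t} = ↑S := by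
    ext h
    simp [hSdef]
  rw [hset, Set.ncard_coe_finset]
  rcases S.eq_empty_or_nonempty with hS | hSne
  · simp [hS]
  -- notation
  set Y : EuclideanSpace ℝ (Fin n × Fin q) := johnsonY w with hY
  have hYY : ⟪Y, Y⟫ = n * σ := by
    rw [hY, inner_johnsonYY hq0' w hWpos, hσ]
    field_simp
    exact Finset.sum_congr rfl fun x _ => by ring
  have hXY : ∀ h ∈ S, (n:ℝ) * t < ⟪johnsonX h, Y⟫ := by
    intro h hh
    rw [hY, inner_johnsonXY hq0' h w hWpos]
    have hcond := (Finset.mem_filter.1 hh).2.2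
    have := (mul_lt_mul_iff_right₀ hn0).2 hcond
    rw [mul_add] at this
    have hn' : (n:ℝ) * ((1/(n:ℝ)) * ∑ i, w i (h i) / (∑ j, w i j))
        = ∑ i, w i (h i) / (∑ j, w i j) := by
      field_simp
    rw [hn'] at this
    have : (n:ℝ) * (1/(q:ℝ)) + (n:ℝ) * t < ∑ i, w i (h i) / (∑ j, w i j) := this
    have hnq : (n:ℝ) * (1/(q:ℝ)) = n / q := by ring
    linarith [hnq ▸ this]
  have hmemC : ∀ h ∈ S, h ∈ C := fun h hh => (Finset.mem_filter.1 hh).2.1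
  have hσpos : 0 < σ := by
    obtain ⟨h₀, hh₀⟩ := hSne
    have h1 : 0 < ⟪johnsonX h₀, Y⟫ := lt_of_le_of_lt (by positivity) (hXY h₀ hh₀)
    have hσnn : 0 ≤ σ := by
      have hnn := real_inner_self_nonneg (x := Y)
      rw [hYY] at hnn
      by_contra hcon
      push_neg at hcon
      nlinarith [hnn]
    rcases hσnn.lt_or_eq with h | h
    · exact h
    · exfalso
      have hY0 : Y = 0 := by
        have : ⟪Y, Y⟫ ≤ 0 := by rw [hYY, ← h]; simp
        exact real_inner_self_nonpos.1 this
      rw [hY0, inner_zero_right] at h1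
      exact lt_irrefl _ h1
  have ht2 : t^2 = a * σ * β := Real.sq_sqrt (by positivity)
  -- the minimum inner product
  set T : ℝ := S.inf' hSne (fun h => ⟪johnsonX h, Y⟫) with hTdef
  have hTle : ∀ h ∈ S, T ≤ ⟪johnsonX h, Y⟫ := fun h hh => Finset.inf'_le _ hh
  have hTgt : (n:ℝ) * t < T := by
    obtain ⟨h₀, hh₀, hT⟩ := Finset.exists_mem_eq_inf' hSne (fun h => ⟪johnsonX h, Y⟫)
    rw [hTdef, hT]
    exact hXY h₀ hh₀
  have hTpos : 0 < T := lt_of_le_of_lt (by positivity) hTgt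
  set c : ℝ := T / ((n:ℝ) * σ) with hc
  have hnσ : 0 < (n:ℝ) * σ := by positivity
  have hcpos : 0 < c := div_pos hTpos hnσ
  have hcT : c * ((n:ℝ) * σ) = T := div_mul_cancel₀ _ hnσ.ne'
  set z : (Fin n → Fin q) → EuclideanSpace ℝ (Fin n × Fin q) :=
    fun h => johnsonX h - c • Y with hz
  clear_value a σ t S Y T c z
  -- pairwise negative inner products
  have hzpair : ∀ h ∈ S, ∀ h' ∈ S, h ≠ h' → ⟪z h, z h'⟫ < 0 := by
    intro h hh h' hh' hne
    have hXX : ⟪johnsonX h, johnsonX h'⟫ ≤ (n:ℝ) * a * β := by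
      rw [inner_johnsonX hq0' h h']
      have hC : h ∈ C := hmemC h hh
      have hC' : h' ∈ C := hmemC h' hh'
      have hd := hdist h hC h' hC' hne
      rw [fracDist] at hd
      have hd' : (n:ℝ) * (a * (1 - β)) ≤ (hammingDist h h' : ℝ) := by
        have h1 : (n:ℝ) * (a * (1 - β)) ≤ (n:ℝ) * ((hammingDist h h' : ℝ)/n) :=
          mul_le_mul_of_nonneg_left hd hn0.le
        have h2 : (n:ℝ) * ((hammingDist h h' : ℝ)/n) = (hammingDist h h' : ℝ) := by
          field_simp
        linarith
      have heq : (n:ℝ) - (n:ℝ) * (a * (1-β)) - n/q = (n:ℝ) * a * β := by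
        rw [ha]; field_simp; ring
      linarith
    have hexp : ⟪z h, z h'⟫ = ⟪johnsonX h, johnsonX h'⟫
        - c * ⟪johnsonX h, Y⟫ - c * ⟪johnsonX h', Y⟫ + c * (c * ⟪Y, Y⟫) := by
      rw [hz]
      simp only [inner_sub_left, inner_sub_right, real_inner_smul_left, real_inner_smul_right]
      rw [real_inner_comm Y (johnsonX h')]
      ring
    rw [hexp, hYY, hcT]
    have h1 : c * ⟪johnsonX h, Y⟫ ≥ c * T := mul_le_mul_of_nonneg_left (hTle h hh) hcpos.le
    have h2 : c * ⟪johnsonX h', Y⟫ ≥ c * T := mul_le_mul_of_nonneg_left (hTle h' hh') hcpos.le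
    have h3 : (n:ℝ) * a * β < c * T := by
      have hT2 : ((n:ℝ) * t)^2 < T^2 := by
        have := mul_self_lt_mul_self (by positivity) hTgt
        simpa [pow_two] using this
      have hcTval : c * T = T^2 / ((n:ℝ) * σ) := by
        rw [hc]; field_simp
      rw [hcTval]
      have : ((n:ℝ) * t)^2 / ((n:ℝ) * σ) = (n:ℝ) * a * β := by
        rw [mul_pow, ht2]
        field_simp
      rw [← this]
      gcongr
    linarith
  -- apply the obtuse bound
  have hker : ∀ h ∈ S, z h ∈ LinearMap.ker (rowSumMap n q) := by
    intro h _
    have hYk : Y ∈ LinearMap.ker (rowSumMap n q) := by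
      rw [hY]; exact johnsonY_mem_ker hq0' w hWpos
    rw [hz]
    exact Submodule.sub_mem _ (johnsonX_mem_ker hq0' h) (Submodule.smul_mem _ _ hYk)
  set s : Finset (EuclideanSpace ℝ (Fin n × Fin q)) := S.image z with hs
  have hinj : Set.InjOn z ↑S := by
    intro h hh h' hh' hzz
    by_contra hne
    have hlt := hzpair h hh h' hh' hne
    rw [hzz] at hlt
    exact absurd hlt (not_lt.2 real_inner_self_nonneg)
  have hcard : S.card = s.card := (Finset.card_image_of_injOn hinj).symm
  have hpair' : ∀ x ∈ s, ∀ y ∈ s, x ≠ y → ⟪x, y⟫ < 0 := by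
    intro x hx y hy hxy
    obtain ⟨h, hh, rfl⟩ := Finset.mem_image.1 hx
    obtain ⟨h', hh', rfl⟩ := Finset.mem_image.1 hy
    exact hzpair h hh h' hh' (fun e => hxy (by rw [e]))
  have hmem : ∀ x ∈ s, x ∈ LinearMap.ker (rowSumMap n q) := by
    intro x hx
    obtain ⟨h, hh, rfl⟩ := Finset.mem_image.1 hx
    exact hker h hh
  have hfinal := obtuse_card (LinearMap.ker (rowSumMap n q)) s hmem hpair'
  rw [finrank_ker_rowSumMap n q (by omega)] at hfinal
  rw [hcard]
  calc s.card ≤ n * (q-1) + 1 := hfinal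
    _ = (q-1) * n + 1 := by rw [Nat.mul_comm]
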